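/- If R is a commutative unital ring with D(R) < ∞ (Davenport constant of the multiplicative monoid), then R is finite. -/

import Mathlib

/-- A list (sequence) in a commutative monoid is reducible if a proper
subsequence has the same product. -/
def Reducible {M : Type*} [CommMonoid M] (A : List M) : Prop :=
  ∃ B : List M, List.Sublist B A ∧ B.length < A.length ∧ B.prod = A.prod

/-- The Davenport constant: the least positive `n` such that every sequence of
length `n` is reducible (`⊤` if none exists). -/
noncomputable def davenport (M : Type*) [CommMonoid M] : ℕ∞ :=
  sInf {k : ℕ∞ | ∃ n : ℕ, k = n ∧ 0 < n ∧ ∀ A : List M, A.length = n → Reducible A}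

/-- An ideal of a commutative monoid. -/
def IsMulIdeal {M : Type*} [CommMonoid M] (T : Set M) : Prop :=
  ∀ s t : M, t ∈ T → s * t ∈ T

/-- The relative Davenport constant `D(S, T)`: the least positive `n` such
that every sequence of length `n` with product in `T` is reducible. -/
noncomputable def davenportRel (M : Type*) [CommMonoid M] (T : Set M) : ℕ∞ :=
  sInf {k : ℕ∞ | ∃ n : ℕ, k = n ∧ 0 < n ∧
    ∀ A : List M, A.length = n → A.prod ∈ T → Reducible A}

/-- `(S, T)` is a unit-stabilized pair. -/
def UnitStabilizedPair (M : Type*) [CommMonoid M] (T : Set M) : Prop :=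
  ∀ a b : M, a * b ∉ T →
    {u : Mˣ | (u : M) * a = a} = {u : Mˣ | (u : M) * (a * b) = a * b} →
    ∃ u : Mˣ, a * b = a * u


open List

section GroupLemmas

variable {G : Type*} [CommGroup G]

lemma mySupFinite {H K : Subgroup G} (hH : (H : Set G).Finite) (hK : (K : Set G).Finite) :
    ((H ⊔ K : Subgroup G) : Set G).Finite := by
  refine (hH.mul hK).subset ?_
  intro x hx
  obtain ⟨y, hy, z, hz, rfl⟩ := Subgroup.mem_sup.mp hx
  exact Set.mul_mem_mul hy hz

lemma myClosureFinite (L : List G) (hT : ∀ x ∈ L, IsOfFinOrder x) :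
    ((Subgroup.closure {x : G | x ∈ L} : Subgroup G) : Set G).Finite := by
  induction L with
  | nil =>
      have : {x : G | x ∈ ([] : List G)} = (∅ : Set G) := by ext; simp
      rw [this, Subgroup.closure_empty]
      simp
  | cons a L ih =>
      have hset : {x : G | x ∈ a :: L} = {a} ∪ {x : G | x ∈ L} := by ext; simp
      rw [hset, Subgroup.closure_union, ← Subgroup.zpowers_eq_closure]
      exact mySupFinite ((hT a mem_cons_self).finite_zpowers)
        (ih fun x hx => hT x (mem_cons_of_mem a hx))

lemma myExistsZSF [Infinite G] (n : ℕ) :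
    ∃ L : List G, L.length = n ∧ ∀ C : List G, C.Subperm L → C ≠ [] → C.prod ≠ 1 := by
  classical
  by_cases hg : ∃ g : G, ∀ j, 0 < j → j ≤ n → g ^ j ≠ 1
  · obtain ⟨g, hg⟩ := hg
    refine ⟨List.replicate n g, List.length_replicate, ?_⟩
    intro C hC hne hp
    have hCr : C = List.replicate C.length g :=
      eq_replicate_length.mpr fun b hb => eq_of_mem_replicate (hC.subset hb)
    have hpow : g ^ C.length = 1 := by
      rw [← List.prod_replicate, ← hCr, hp]
    exact hg C.length (List.length_pos_iff.mpr hne)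
      (by simpa using hC.length_le) hpow
  · push_neg at hg
    have tor : ∀ g : G, IsOfFinOrder g := by
      intro g
      obtain ⟨j, hj1, _, hj⟩ := hg g
      exact isOfFinOrder_iff_pow_eq_one.mpr ⟨j, hj1, hj⟩
    have key : ∀ k : ℕ, ∃ L : List G, L.length = k ∧
        ∀ C : List G, C.Subperm L → C ≠ [] → C.prod ≠ 1 := by
      intro k
      induction k with
      | zero => exact ⟨[], rfl, fun C hC hne _ => hne (List.subperm_nil.mp hC)⟩
      | succ k ih =>
          obtain ⟨L, hlen, hzsf⟩ := ih
          set H : Subgroup G := Subgroup.closure {x : G | x ∈ L} with hH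
          have hHfin : ((H : Subgroup G) : Set G).Finite := myClosureFinite L fun x _ => tor x
          obtain ⟨g, hgH⟩ : ∃ g : G, g ∉ H := by
            by_contra hall
            push_neg at hall
            have : (Set.univ : Set G).Finite := hHfin.subset fun x _ => hall x
            exact Set.infinite_univ this
          have hLH : ∀ x ∈ L, x ∈ H := fun x hx => Subgroup.subset_closure hx
          have hgL : g ∉ L := fun hgl => hgH (hLH g hgl)
          refine ⟨g :: L, by simp [hlen], ?_⟩
          intro C hC hne hp
          by_cases hgC : g ∈ C
          · -- C contains g
            have hcount : g ∉ C.erase g := by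
              intro hmem
              have h2 : 2 ≤ C.count g := by
                have := (List.count_erase_self : count g (C.erase g) = count g C - 1) ▸ List.count_pos_iff.mpr hmem
                omega
              have hle : C.count g ≤ (g :: L).count g := hC.count_le g
              have : (g :: L).count g = 1 := by
                simp [List.count_cons, List.count_eq_zero_of_not_mem hgL]
              omega
            have hperm : C ~ g :: C.erase g := List.perm_cons_erase hgC
            have hprod : g * (C.erase g).prod = 1 := by
              rw [← List.prod_cons, ← hperm.prod_eq, hp]
            have hmemL : ∀ x ∈ C.erase g, x ∈ L := by
              intro x hx
              have hxC : x ∈ C := List.mem_of_mem_erase hx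
              have : x ∈ g :: L := hC.subset hxC
              rcases List.mem_cons.mp this with h | h
              · exact absurd (h ▸ hx) hcount
              · exact h
            have : g = ((C.erase g).prod)⁻¹ := by
              rw [eq_inv_iff_mul_eq_one]; exact hprod
            have : g ∈ H := by
              rw [this]
              exact inv_mem (list_prod_mem fun x hx => hLH x (hmemL x hx))
            exact hgH this
          · -- g ∉ C, so C <+~ L
            have hCL : C.Subperm L := by
              rw [List.subperm_ext_iff] at hC ⊢
              intro x hx
              have := hC x hx
              have hxg : x ≠ g := fun h => hgC (h ▸ hx)
              rwa [List.count_cons_of_ne hxg.symm] at this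
            exact hzsf C hCL hne hp
    obtain ⟨L, hL1, hL2⟩ := key n
    exact ⟨L, hL1, hL2⟩

lemma myNotReducibleMap {M : Type*} [CommMonoid M] (f : G →* M)
    (hf : Function.Injective f) {L : List G}
    (hzsf : ∀ C : List G, C.Subperm L → C ≠ [] → C.prod ≠ 1) :
    ¬ Reducible (L.map f) := by
  rintro ⟨B, hs, hlen, hprod⟩
  obtain ⟨B', hB', rfl⟩ := List.sublist_map_iff.mp hs
  have hBL : B'.prod = L.prod := by
    apply hf
    rw [map_list_prod, map_list_prod, hprod]
  obtain ⟨C, hperm⟩ := hB'.exists_perm_append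
  have hClen : 0 < C.length := by
    have h1 : L.length = B'.length + C.length := by
      rw [hperm.length_eq, List.length_append]
    have h2 : B'.length < L.length := by simpa using hlen
    omega
  have hCprod : C.prod = 1 := by
    have := hperm.prod_eq
    rw [List.prod_append, hBL] at this
    exact (left_eq_mul.mp this)
  have hCsub : C.Subperm L :=
    ((List.sublist_append_right B' C).subperm).trans hperm.symm.subperm
  exact hzsf C hCsub (List.length_pos_iff.mp hClen) hCprod

end GroupLemmas
section RingLemmas

lemma myFiniteUnits {M : Type*} [CommMonoid M] {n : ℕ}
    (hn : ∀ A : List M, A.length = n → Reducible A) : Finite Mˣ := by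
  by_contra hinf
  rw [not_finite_iff_infinite] at hinf
  obtain ⟨L, hlen, hzsf⟩ := myExistsZSF (G := Mˣ) n
  exact myNotReducibleMap (Units.coeHom M) (fun _ _ h => Units.ext h) hzsf (hn _ (by simp [hlen]))

lemma myFiniteField {F : Type*} [Field F] {n : ℕ}
    (hn : ∀ A : List F, A.length = n → Reducible A) : Finite F := by
  have hu : Finite Fˣ := myFiniteUnits hn
  have huniv : (Set.univ : Set F).Finite := by
    refine (((Set.finite_range (Units.val : Fˣ → F))).insert 0).subset ?_
    intro x _
    rcases eq_or_ne x 0 with rfl | hx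
    · exact Set.mem_insert _ _
    · exact Set.mem_insert_of_mem _ ⟨Units.mk0 x hx, rfl⟩
  exact Set.finite_univ_iff.mp huniv

lemma myLiftList {R S : Type*} (f : R → S) (hf : Function.Surjective f) (A : List S) :
    ∃ A' : List R, A'.map f = A := by
  induction A with
  | nil => exact ⟨[], rfl⟩
  | cons a A ih =>
      obtain ⟨A', hA'⟩ := ih
      obtain ⟨r, hr⟩ := hf a
      exact ⟨r :: A', by simp [hA', hr]⟩

lemma myReducibleSurj {R S : Type*} [CommMonoid R] [CommMonoid S] (f : R →* S)
    (hf : Function.Surjective f) {n : ℕ}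
    (hn : ∀ A : List R, A.length = n → Reducible A) :
    ∀ A : List S, A.length = n → Reducible A := by
  intro A hA
  obtain ⟨A', rfl⟩ := myLiftList f hf A
  obtain ⟨B, hs, hlen, hprod⟩ := hn A' (by simpa using hA)
  exact ⟨B.map f, hs.map f, by simpa using hlen,
    by rw [← map_list_prod, ← map_list_prod, hprod]⟩

lemma myMaxSpecFinite {R : Type*} [CommRing R] {n : ℕ}
    (hn : ∀ A : List R, A.length = n → Reducible A) : Finite (MaximalSpectrum R) := by
  classical
  by_contra hinf
  rw [not_finite_iff_infinite] at hinf
  let e : Fin n ↪ MaximalSpectrum R := Fin.valEmbedding.trans (Infinite.natEmbedding _)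
  set m : Fin n → Ideal R := fun i => (e i).asIdeal with hm
  have hmax : ∀ i, (m i).IsMaximal := fun i => (e i).isMaximal
  have hne : ∀ i j : Fin n, i ≠ j → m i ≠ m j := by
    intro i j hij h
    exact hij (e.injective (MaximalSpectrum.ext h))
  have key : ∀ i j : Fin n, i ≠ j → ∃ y, y ∈ m j ∧ 1 - y ∈ m i := by
    intro i j hij
    have hsup : m i ⊔ m j = ⊤ := (hmax i).coprime_of_ne (hmax j) (hne i j hij)
    have h1 : (1 : R) ∈ m i ⊔ m j := hsup ▸ Submodule.mem_top
    obtain ⟨x, hx, y, hy, hxy⟩ := Submodule.mem_sup.mp h1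
    exact ⟨y, hy, by rw [← hxy]; simpa using hx⟩
  choose y hy1 hy2 using key
  set Y : Fin n → Fin n → R := fun i j => if h : i ≠ j then y i j h else 1 with hY
  have hY1 : ∀ i j, i ≠ j → Y i j ∈ m j := by
    intro i j h; simp only [hY, dif_pos h]; exact hy1 i j h
  have hY2 : ∀ i j, i ≠ j → 1 - Y i j ∈ m i := by
    intro i j h; simp only [hY, dif_pos h]; exact hy2 i j h
  set q : ∀ i : Fin n, R →+* R ⧸ m i := fun i => Ideal.Quotient.mk (m i) with hq
  set b : Fin n → R := fun i => ∏ j ∈ Finset.univ.erase i, Y i j with hb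
  have hb_mem : ∀ i j : Fin n, j ≠ i → b i ∈ m j := by
    intro i j hji
    have hjmem : j ∈ Finset.univ.erase i := Finset.mem_erase.mpr ⟨hji, Finset.mem_univ _⟩
    show (∏ k ∈ Finset.univ.erase i, Y i k) ∈ m j
    rw [← Finset.mul_prod_erase _ _ hjmem]
    exact Ideal.mul_mem_right _ _ (hY1 i j (Ne.symm hji))
  have hb_one : ∀ i : Fin n, q i (b i) = 1 := by
    intro i
    rw [hb]
    simp only [map_prod]
    refine Finset.prod_eq_one ?_
    intro j hj
    have hij : i ≠ j := fun h => (Finset.mem_erase.mp hj).1 (h.symm)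
    have := hY2 i j hij
    have : q i (1 - Y i j) = 0 := Ideal.Quotient.eq_zero_iff_mem.mpr this
    rw [map_sub, map_one, sub_eq_zero] at this
    exact this.symm
  set a : Fin n → R := fun i => ∑ j ∈ Finset.univ.erase i, b j with ha
  have ha_mem : ∀ i : Fin n, a i ∈ m i := by
    intro i
    refine Ideal.sum_mem _ ?_
    intro j hj
    exact hb_mem j i (Finset.mem_erase.mp hj).1.symm
  have ha_one : ∀ i j : Fin n, j ≠ i → q j (a i) = 1 := by
    intro i j hji
    have hjmem : j ∈ Finset.univ.erase i := Finset.mem_erase.mpr ⟨hji, Finset.mem_univ _⟩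
    rw [ha]
    simp only [map_sum]
    rw [← Finset.add_sum_erase _ _ hjmem]
    rw [hb_one j]
    have : ∀ k ∈ (Finset.univ.erase i).erase j, q j (b k) = 0 := by
      intro k hk
      exact Ideal.Quotient.eq_zero_iff_mem.mpr (hb_mem k j (Ne.symm (Finset.mem_erase.mp hk).1))
    rw [Finset.sum_eq_zero this, add_zero]
  -- build the list
  set A : List R := (List.finRange n).map a with hA
  have hAlen : A.length = n := by simp [hA]
  obtain ⟨B, hs, hlen, hprod⟩ := hn A hAlen
  obtain ⟨l, hl, rfl⟩ := List.sublist_map_iff.mp hs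
  have hlnodup : l.Nodup := (List.nodup_finRange n).sublist hl
  have hllen : l.length < n := by
    have := hlen
    simp only [List.length_map, hAlen] at this ⊢
    omega
  obtain ⟨i, hi⟩ : ∃ i : Fin n, i ∉ l := by
    by_contra hall
    push_neg at hall
    have hsub : (List.finRange n).Subperm l :=
      List.subperm_of_subset (List.nodup_finRange n) fun x _ => hall x
    have := hsub.length_le
    simp only [List.length_finRange] at this
    omega
  -- A.prod ∈ m i
  have hAprod : q i A.prod = 0 := by
    refine Ideal.Quotient.eq_zero_iff_mem.mpr ?_
    have : A.prod = ∏ j : Fin n, a j := by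
      rw [hA, ← List.ofFn_eq_map, List.prod_ofFn]
    rw [this, ← Finset.mul_prod_erase _ _ (Finset.mem_univ i)]
    exact Ideal.mul_mem_right _ _ (ha_mem i)
  have hBprod : q i (l.map a).prod = 1 := by
    rw [map_list_prod (q i), List.map_map]
    refine List.prod_eq_one ?_
    intro x hx
    obtain ⟨j, hj, rfl⟩ := List.mem_map.mp hx
    exact ha_one j i (fun h => hi (h ▸ hj))
  rw [hprod, hAprod] at hBprod
  have : Nontrivial (R ⧸ m i) := Ideal.Quotient.nontrivial_iff.mpr (hmax i).ne_top
  exact zero_ne_one hBprod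

end RingLemmas
lemma myExistsBound {R : Type*} [CommRing R] (h : davenport R ≠ ⊤) :
    ∃ n : ℕ, 0 < n ∧ ∀ A : List R, A.length = n → Reducible A := by
  rw [davenport] at h
  by_contra hno
  push_neg at hno
  apply h
  rw [sInf_eq_top]
  rintro a ⟨n, rfl, hpos, hA⟩
  obtain ⟨A, hAl, hAr⟩ := hno n hpos
  exact absurd (hA A hAl) hAr

theorem finite_of_davenport_lt_top {R : Type*} [CommRing R]
    (h : davenport R ≠ ⊤) : Finite R := by
  classical
  obtain ⟨n, hpos, hn⟩ := myExistsBound h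
  have hu : Finite Rˣ := myFiniteUnits hn
  have hms : Finite (MaximalSpectrum R) := myMaxSpecFinite hn
  have hquot : ∀ m : MaximalSpectrum R, Finite (R ⧸ m.asIdeal) := by
    intro m
    have hmax : m.asIdeal.IsMaximal := m.isMaximal
    letI : Field (R ⧸ m.asIdeal) := Ideal.Quotient.field m.asIdeal
    exact myFiniteField (myReducibleSurj (Ideal.Quotient.mk m.asIdeal).toMonoidHom
      Ideal.Quotient.mk_surjective hn)
  set J : Ideal R := Ideal.jacobson (⊥ : Ideal R) with hJdef
  have hJ : (J : Set R).Finite := by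
    have himg : ((fun x : R => 1 + x) '' (J : Set R)).Finite := by
      refine (Set.finite_range (Units.val : Rˣ → R)).subset ?_
      rintro _ ⟨x, hx, rfl⟩
      have hunit : IsUnit (1 + x) := by
        have := Ideal.mem_jacobson_bot.mp hx 1
        simpa [add_comm] using this
      obtain ⟨u, hu⟩ := hunit
      exact ⟨u, hu⟩
    exact Set.Finite.of_finite_image himg ((add_right_injective (1 : R)).injOn)
  set Φ : R → ∀ m : MaximalSpectrum R, R ⧸ m.asIdeal :=
    fun x m => Ideal.Quotient.mk m.asIdeal x with hΦ
  have hfib : ∀ x y : R, Φ x = Φ y → x - y ∈ J := by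
    intro x y hxy
    rw [hJdef, Ideal.jacobson]
    refine Submodule.mem_sInf.mpr ?_
    rintro I ⟨-, hI⟩
    have := congrFun hxy ⟨I, hI⟩
    simp only [hΦ] at this
    rwa [Ideal.Quotient.eq] at this
  have huniv : (Set.univ : Set R).Finite := by
    have hcover : (Set.univ : Set R) ⊆ ⋃ b ∈ Set.range Φ, Φ ⁻¹' {b} := by
      intro x _
      exact Set.mem_biUnion ⟨x, rfl⟩ rfl
    haveI : ∀ m : MaximalSpectrum R, Finite (R ⧸ m.asIdeal) := hquot
    have hrange : (Set.range Φ).Finite := Set.toFinite _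
    refine Set.Finite.subset (Set.Finite.biUnion hrange ?_) hcover
    rintro _ ⟨x₀, rfl⟩
    refine (hJ.image fun j => x₀ + j).subset ?_
    intro z hz
    have : z - x₀ ∈ J := hfib z x₀ hz
    exact ⟨z - x₀, this, by ring⟩
  exact Set.finite_univ_iff.mp huniv
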